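/- Let I ⊂ S be a monomial ideal whose irredundant irreducible decomposition is I = ⋂_{a∈E} m^a with each a ∈ (Z_{>0})^{t(a)} (i.e., each component is generated by powers of an initial segment of variables). Then I is strongly stable if and only if: for every a = (a_1,...,a_t) ∈ E, every i with a_i > 1, and every j with i < j ≤ t, there exists b ∈ E with m^{a − e_i + e_j} ⊇ m^b, where e_i, e_j are unit vectors. -/
import Mathlib


open MvPolynomial Classical

noncomputable section

/-- The monomial `x^a` with coefficient `1`. -/
def mon {σ : Type*} (k : Type*) [Field k] (a : σ →₀ ℕ) : MvPolynomial σ k :=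
  MvPolynomial.monomial a 1

/-- `x^a` for an exponent vector given as a function on a finite type. -/
def monF {σ : Type*} [Fintype σ] (k : Type*) [Field k] (a : σ → ℕ) : MvPolynomial σ k :=
  mon k (Finsupp.equivFunOnFinite.symm a)

/-- A monomial ideal: an ideal generated by monomials. -/
def IsMonomialIdeal {σ : Type*} [Fintype σ] {k : Type*} [Field k]
    (I : Ideal (MvPolynomial σ k)) : Prop :=
  ∃ A : Set (σ → ℕ), I = Ideal.span ((monF k) '' A)

/-- The set `G(I)` of (exponent vectors of) minimal monomial generators of a monomial
ideal `I`: monomials in `I` such that dividing by any variable leaves `I`. -/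
def minGens {σ : Type*} [Fintype σ] {k : Type*} [Field k]
    (I : Ideal (MvPolynomial σ k)) : Set (σ → ℕ) :=
  {a | monF k a ∈ I ∧ ∀ i : σ, 0 < a i → monF k (a - Pi.single i 1) ∉ I}

/-- The total degree `|a|` of an exponent vector. -/
def degV {σ : Type*} [Fintype σ] (a : σ → ℕ) : ℕ := ∑ i, a i

/-- A strongly stable (monomial) ideal in `k[x_1, …, x_n]`. -/
def StronglyStable {n : ℕ} {k : Type*} [Field k]
    (I : Ideal (MvPolynomial (Fin n) k)) : Prop :=
  IsMonomialIdeal I ∧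
    ∀ a ∈ minGens I, ∀ i j : Fin n, j < i → 0 < a i →
      monF k (a - Pi.single i 1 + Pi.single j 1) ∈ I

/-- All minimal generators of `I` have degree at most `d`. -/
def GensDegLE {σ : Type*} [Fintype σ] {k : Type*} [Field k]
    (I : Ideal (MvPolynomial σ k)) (d : ℕ) : Prop :=
  ∀ a ∈ minGens I, degV a ≤ d

/-- `psum a i = a_1 + ⋯ + a_{i-1}` (the partial sum over indices `< i`). -/
def psum {n : ℕ} (a : Fin n → ℕ) (i : Fin n) : ℕ :=
  ∑ j ∈ Finset.univ.filter (fun j => j < i), a j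

/-- The exponent vector of the alternative polarization `b-pol(x^a)`:
`b-pol(x^a) = ∏_{1 ≤ i ≤ n, b_{i-1}+1 ≤ j ≤ b_i} x_{i,j}` where `b_i = a_1 + ⋯ + a_i`. -/
def bpolExp {n : ℕ} (d : ℕ) (a : Fin n → ℕ) : Fin n × Fin d → ℕ := fun p =>
  if psum a p.1 ≤ (p.2 : ℕ) ∧ (p.2 : ℕ) < psum a p.1 + a p.1 then 1 else 0

/-- The alternative polarization `b-pol(I) ⊆ k[x_{i,j}]` of a monomial ideal `I`. -/
def bpolIdeal {n : ℕ} (d : ℕ) {k : Type*} [Field k]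
    (I : Ideal (MvPolynomial (Fin n) k)) : Ideal (MvPolynomial (Fin n × Fin d) k) :=
  Ideal.span {q | ∃ a ∈ minGens I, q = monF k (bpolExp d a)}

/-- The prime monomial ideal `(x_i : i ∈ F)`. -/
def varIdeal {σ : Type*} (k : Type*) [Field k] (F : Set σ) : Ideal (MvPolynomial σ k) :=
  Ideal.span (MvPolynomial.X '' F)

/-- `F` gives an irreducible component `(x_i : i ∈ F)` of the squarefree monomial ideal `J`,
i.e. `F` is minimal among subsets with `J ⊆ (x_i : i ∈ F)`. -/
def IsIrredCompSF {σ : Type*} {k : Type*} [Field k]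
    (J : Ideal (MvPolynomial σ k)) (F : Set σ) : Prop :=
  J ≤ varIdeal k F ∧ ∀ F' ⊆ F, J ≤ varIdeal k F' → F' = F

/-- The Alexander dual of a squarefree monomial ideal: the ideal generated by the
monomials `∏_{i ∈ F} x_i` over the irreducible components `(x_i : i ∈ F)` of `J`. -/
def adual {σ : Type*} [Fintype σ] {k : Type*} [Field k]
    (J : Ideal (MvPolynomial σ k)) : Ideal (MvPolynomial σ k) :=
  Ideal.span {q | ∃ F : Set σ, IsIrredCompSF J F ∧
    q = monF k (fun i => if i ∈ F then 1 else 0)}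

/-- Transpose `x_{i,j} ↦ y_{j,i}` of an ideal of `k[x_{i,j}]`. -/
def transposeIdeal {n d : ℕ} {k : Type*} [Field k]
    (J : Ideal (MvPolynomial (Fin n × Fin d) k)) : Ideal (MvPolynomial (Fin d × Fin n) k) :=
  Ideal.map (MvPolynomial.rename (Prod.swap : Fin n × Fin d → Fin d × Fin n)
    : MvPolynomial (Fin n × Fin d) k →ₐ[k] MvPolynomial (Fin d × Fin n) k) J

end

noncomputable section

/-- The irreducible monomial ideal `𝔪^a = (x_1^{a_1}, …, x_t^{a_t}) ⊆ k[x_1,…,x_n]`. -/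
def powIdeal {n : ℕ} (k : Type*) [Field k] (t : ℕ) (h : t ≤ n) (a : Fin t → ℕ) :
    Ideal (MvPolynomial (Fin n) k) :=
  Ideal.span {q | ∃ i : Fin t, q = monF k (Pi.single (Fin.castLE h i) (a i))}


section AuxLemmas

variable {σ : Type*} [Fintype σ] {k : Type*} [Field k]

lemma equivSymm_add (a b : σ → ℕ) :
    Finsupp.equivFunOnFinite.symm a + Finsupp.equivFunOnFinite.symm b
      = Finsupp.equivFunOnFinite.symm (a + b) := by
  ext x; simp

lemma monF_mul (a b : σ → ℕ) : monF k a * monF k b = monF k (a + b) := by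
  unfold monF mon
  rw [monomial_mul, one_mul, equivSymm_add]

lemma monF_mem_mono {I : Ideal (MvPolynomial σ k)} {a b : σ → ℕ} (h : monF k a ∈ I)
    (hab : ∀ x, a x ≤ b x) : monF k b ∈ I := by
  have : monF k b = monF k (fun x => b x - a x) * monF k a := by
    rw [monF_mul]; congr 1; funext x; have := hab x; simp; omega
  rw [this]; exact Ideal.mul_mem_left _ _ h

lemma exists_le_of_coeff_ne_zero {B : Set (σ → ℕ)} {p : MvPolynomial σ k}
    (hp : p ∈ Ideal.span ((monF k) '' B)) :
    ∀ d : σ →₀ ℕ, coeff d p ≠ 0 → ∃ b ∈ B, ∀ x, b x ≤ d x := by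
  refine Submodule.span_induction ?_ ?_ ?_ ?_ hp
  · rintro _ ⟨b, hb, rfl⟩ d hd
    unfold monF mon at hd
    rw [coeff_monomial] at hd
    split_ifs at hd with h
    · subst h
      exact ⟨b, hb, fun x => le_refl _⟩
    · exact absurd rfl hd
  · intro d hd; simp at hd
  · intro p q _ _ hp hq d hd
    rw [coeff_add] at hd
    rcases (by by_contra h; push_neg at h; rw [h.1, h.2] at hd; simp at hd :
      coeff d p ≠ 0 ∨ coeff d q ≠ 0) with h | h
    · exact hp d h
    · exact hq d h
  · intro r p _ hp d hd
    rw [smul_eq_mul, coeff_mul] at hd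
    obtain ⟨x, hx, hne⟩ := Finset.exists_ne_zero_of_sum_ne_zero hd
    have h2 : coeff x.2 p ≠ 0 := fun h => hne (by rw [h, mul_zero])
    obtain ⟨b, hb, hle⟩ := hp x.2 h2
    refine ⟨b, hb, fun y => (hle y).trans ?_⟩
    have hxd : x.1 + x.2 = d := Finset.HasAntidiagonal.mem_antidiagonal.mp hx
    have : x.2 y ≤ d y := by rw [← hxd]; simp
    exact this

lemma monF_mem_span_iff {B : Set (σ → ℕ)} {c : σ → ℕ} :
    monF k c ∈ Ideal.span ((monF k) '' B) ↔ ∃ b ∈ B, ∀ x, b x ≤ c x := by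
  constructor
  · intro h
    have h1 : coeff (Finsupp.equivFunOnFinite.symm c) (monF k c) ≠ (0 : k) := by
      unfold monF mon
      rw [coeff_monomial, if_pos rfl]
      exact one_ne_zero
    exact exists_le_of_coeff_ne_zero h _ h1
  · rintro ⟨b, hb, hle⟩
    exact monF_mem_mono (Ideal.subset_span ⟨b, hb, rfl⟩) hle

lemma exists_minGen_le {I : Ideal (MvPolynomial σ k)} {c : σ → ℕ} (hc : monF k c ∈ I) :
    ∃ g ∈ minGens I, ∀ x, g x ≤ c x := by
  generalize hdeg : degV c = d
  induction d using Nat.strong_induction_on generalizing c with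
  | _ d ih =>
  subst hdeg
  by_cases hmin : ∀ i : σ, 0 < c i → monF k (c - Pi.single i 1) ∉ I
  · exact ⟨c, ⟨hc, hmin⟩, fun x => le_refl _⟩
  · push_neg at hmin
    obtain ⟨i, hi, hmem⟩ := hmin
    have hlt : degV (c - Pi.single i 1) < degV c := by
      unfold degV
      apply Finset.sum_lt_sum (fun j _ => by simp [Pi.single_apply])
      exact ⟨i, Finset.mem_univ i, by simp; omega⟩
    obtain ⟨g, hg, hle⟩ := ih _ hlt hmem rfl
    exact ⟨g, hg, fun x => (hle x).trans (by simp [Pi.single_apply])⟩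

end AuxLemmas

section PowAux

variable {k : Type*} [Field k]

lemma powIdeal_eq {n : ℕ} (t : ℕ) (h : t ≤ n) (a : Fin t → ℕ) :
    powIdeal k t h a
      = Ideal.span ((monF k) '' {v | ∃ i : Fin t, v = Pi.single (Fin.castLE h i) (a i)}) := by
  unfold powIdeal
  congr 1
  ext q
  constructor
  · rintro ⟨i, rfl⟩; exact ⟨_, ⟨i, rfl⟩, rfl⟩
  · rintro ⟨v, ⟨i, rfl⟩, rfl⟩; exact ⟨i, rfl⟩

lemma monF_mem_powIdeal_iff {n : ℕ} {t : ℕ} {h : t ≤ n} {a : Fin t → ℕ} {c : Fin n → ℕ} :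
    monF k c ∈ powIdeal k t h a ↔ ∃ i : Fin t, a i ≤ c (Fin.castLE h i) := by
  rw [powIdeal_eq, monF_mem_span_iff]
  constructor
  · rintro ⟨b, ⟨i, rfl⟩, hle⟩
    refine ⟨i, ?_⟩
    have := hle (Fin.castLE h i)
    simpa using this
  · rintro ⟨i, hi⟩
    refine ⟨_, ⟨i, rfl⟩, fun x => ?_⟩
    rcases eq_or_ne x (Fin.castLE h i) with rfl | hx
    · simpa using hi
    · simp [Pi.single_apply, hx]

end PowAux

/-- Let `I ⊆ S` be a monomial ideal whose irredundant irreducible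
decomposition is `I = ⋂_{a ∈ E} 𝔪^a` with each component generated by powers of an
initial segment of the variables.  Then `I` is strongly stable iff for every
`a = (a_1,…,a_t) ∈ E`, every `i` with `a_i > 1` and every `j` with `i < j ≤ t`, there is
`b ∈ E` with `𝔪^{a - e_i + e_j} ⊇ 𝔪^b`. -/
theorem stronglyStable_iff_right_shift {n : ℕ} {k : Type*} [Field k]
    (I : Ideal (MvPolynomial (Fin n) k)) (hmon : IsMonomialIdeal I)
    (r : ℕ) (t : Fin r → ℕ) (ht : ∀ s, t s ≤ n) (ht1 : ∀ s, 1 ≤ t s)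
    (a : (s : Fin r) → Fin (t s) → ℕ) (hpos : ∀ s i, 0 < a s i)
    (hdec : I = ⨅ s, powIdeal k (t s) (ht s) (a s))
    (hirr : ∀ s : Fin r,
      ¬ (⨅ s' ∈ Finset.univ.erase s, powIdeal k (t s') (ht s') (a s')) ≤
        powIdeal k (t s) (ht s) (a s)) :
    StronglyStable I ↔
      ∀ (s : Fin r) (i j : Fin (t s)), 1 < a s i → i < j →
        ∃ s' : Fin r,
          powIdeal k (t s') (ht s') (a s') ≤
            powIdeal k (t s) (ht s)
              (fun q => a s q - (if q = i then 1 else 0) + (if q = j then 1 else 0)) := by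
  have hinj : ∀ (s : Fin r) (q q' : Fin (t s)),
      Fin.castLE (ht s) q = Fin.castLE (ht s) q' → q = q' := by
    intro s q q' h
    exact Fin.ext (by simpa using congrArg Fin.val h)
  have hmemI : ∀ c : Fin n → ℕ,
      monF k c ∈ I ↔ ∀ s, ∃ q : Fin (t s), a s q ≤ c (Fin.castLE (ht s) q) := by
    intro c
    rw [hdec, Submodule.mem_iInf]
    exact forall_congr' (fun s => monF_mem_powIdeal_iff)
  have heval : ∀ (g : Fin n → ℕ) (x y p : Fin n),
      ((g - Pi.single x 1 + Pi.single y 1 : Fin n → ℕ)) p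
        = g p - (if p = x then 1 else 0) + (if p = y then 1 else 0) := by
    intro g x y p
    simp [Pi.single_apply]
  constructor
  · rintro ⟨-, hSS⟩ s i j hai hij
    set a' : Fin (t s) → ℕ :=
      fun q => a s q - (if q = i then 1 else 0) + (if q = j then 1 else 0) with ha'
    have hine : i ≠ j := ne_of_lt hij
    -- Step 1: every monomial of I lies in powIdeal a'
    have hIle : ∀ c : Fin n → ℕ, monF k c ∈ I →
        ∃ q : Fin (t s), a' q ≤ c (Fin.castLE (ht s) q) := by
      intro c hcI
      by_contra hfail
      push_neg at hfail
      obtain ⟨g, hg, hgle⟩ := exists_minGen_le hcI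
      obtain ⟨q2, hq2⟩ := ((hmemI g).mp hg.1) s
      have hq2j : q2 = j := by
        by_contra hq2j
        have h1 := hfail q2
        have h2 := hgle (Fin.castLE (ht s) q2)
        have h3 : a' q2 ≤ a s q2 := by
          simp only [ha', if_neg hq2j, add_zero]
          split_ifs <;> omega
        omega
      rw [hq2j] at hq2
      have hgj : g (Fin.castLE (ht s) j) = a s j := by
        have h1 := hfail j
        have h2 := hgle (Fin.castLE (ht s) j)
        have h3 : a' j = a s j + 1 := by
          simp [ha', Ne.symm hine]
        omega
      have hgjpos : 0 < g (Fin.castLE (ht s) j) := by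
        rw [hgj]; exact hpos s j
      have hlt : Fin.castLE (ht s) i < Fin.castLE (ht s) j := hij
      have hshift := hSS g hg (Fin.castLE (ht s) j) (Fin.castLE (ht s) i) hlt hgjpos
      obtain ⟨q3, hq3⟩ := ((hmemI _).mp hshift) s
      rw [heval] at hq3
      have hcj : (Fin.castLE (ht s) q3 = Fin.castLE (ht s) j) ↔ q3 = j :=
        ⟨hinj s _ _, fun h => by rw [h]⟩
      have hci : (Fin.castLE (ht s) q3 = Fin.castLE (ht s) i) ↔ q3 = i :=
        ⟨hinj s _ _, fun h => by rw [h]⟩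
      rcases eq_or_ne q3 j with h3j | h3j
      · rw [if_pos (hcj.mpr h3j), if_neg (fun h => hine ((h3j ▸ hci.mp h).symm))] at hq3
        rw [h3j] at hq3
        have := hpos s j
        omega
      · rcases eq_or_ne q3 i with h3i | h3i
        · rw [if_neg (fun h => h3j (hcj.mp h)), if_pos (hci.mpr h3i)] at hq3
          rw [h3i] at hq3
          have h1 := hfail i
          have h2 := hgle (Fin.castLE (ht s) i)
          have h4 : a' i = a s i - 1 := by simp [ha', hine]
          omega
        · rw [if_neg (fun h => h3j (hcj.mp h)), if_neg (fun h => h3i (hci.mp h))] at hq3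
          have h1 := hfail q3
          have h2 := hgle (Fin.castLE (ht s) q3)
          have h4 : a' q3 = a s q3 := by simp [ha', h3i, h3j]
          omega
    -- Step 2: some component is contained in powIdeal a'
    by_contra hnone
    push_neg at hnone
    have hwit : ∀ s' : Fin r, ∃ q : Fin (t s'),
        ¬ ∃ q' : Fin (t s), a' q' ≤
          (Pi.single (Fin.castLE (ht s') q) (a s' q) : Fin n → ℕ) (Fin.castLE (ht s) q') := by
      intro s'
      by_contra hall
      push_neg at hall
      apply hnone s'
      rw [powIdeal_eq (k := k) (t s') (ht s') (a s'), Ideal.span_le]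
      rintro _ ⟨v, ⟨q, rfl⟩, rfl⟩
      rw [SetLike.mem_coe, monF_mem_powIdeal_iff]
      exact hall q
    choose q hq using hwit
    set C : Fin n → ℕ :=
      fun p => Finset.univ.sup
        (fun s' => (Pi.single (Fin.castLE (ht s') (q s')) (a s' (q s')) : Fin n → ℕ) p) with hC
    have hCI : monF k C ∈ I := by
      rw [hmemI]
      intro s'
      refine ⟨q s', ?_⟩
      have h2 : (Pi.single (Fin.castLE (ht s') (q s')) (a s' (q s')) : Fin n → ℕ)
            (Fin.castLE (ht s') (q s')) ≤ C (Fin.castLE (ht s') (q s')) := by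
        simp only [hC]
        exact Finset.le_sup (f := fun s'' =>
          (Pi.single (Fin.castLE (ht s'') (q s'')) (a s'' (q s'')) : Fin n → ℕ)
            (Fin.castLE (ht s') (q s'))) (Finset.mem_univ s')
      simpa using h2
    obtain ⟨q0, hq0⟩ := hIle C hCI
    have hposq0 : 0 < a' q0 := by
      rcases eq_or_ne q0 i with h0i | h0i
      · have h4 : a' q0 = a s q0 - 1 := by rw [h0i]; simp [ha', hine]
        have h5 : 1 < a s q0 := by rw [h0i]; exact hai
        omega
      · rcases eq_or_ne q0 j with h0j | h0j
        · have h4 : a' q0 = a s q0 + 1 := by rw [h0j]; simp [ha', Ne.symm hine]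
          omega
        · have h4 : a' q0 = a s q0 := by simp [ha', h0i, h0j]
          have := hpos s q0
          omega
    simp only [hC] at hq0
    obtain ⟨s', -, hs'⟩ :=
      (Finset.le_sup_iff (show (⊥ : ℕ) < a' q0 from hposq0)).mp hq0
    exact hq s' ⟨q0, hs'⟩
  · intro hcond
    refine ⟨hmon, ?_⟩
    intro c hc i j hji hci
    rw [hmemI]
    intro s
    obtain ⟨q0, hq0⟩ := ((hmemI c).mp hc.1) s
    by_cases hA : ∃ q : Fin (t s), Fin.castLE (ht s) q ≠ i ∧ a s q ≤ c (Fin.castLE (ht s) q)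
    · obtain ⟨q, hqi, hqle⟩ := hA
      refine ⟨q, ?_⟩
      rw [heval]
      rw [if_neg hqi]
      split_ifs <;> omega
    · push_neg at hA
      have hq0i : Fin.castLE (ht s) q0 = i := by
        by_contra h
        exact absurd hq0 (not_le.mpr (hA q0 h))
      have hjlt : (j : ℕ) < t s := by
        have h1 : (j : ℕ) < (i : ℕ) := hji
        have h2 : (i : ℕ) = (q0 : ℕ) := by rw [← hq0i]; rfl
        have h3 : (q0 : ℕ) < t s := q0.isLt
        omega
      set qj : Fin (t s) := ⟨(j : ℕ), hjlt⟩ with hqj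
      have hqjc : Fin.castLE (ht s) qj = j := Fin.ext rfl
      have hjine : j ≠ i := ne_of_lt hji
      by_cases hB1 : a s qj ≤ c j + 1
      · refine ⟨qj, ?_⟩
        rw [heval, hqjc, if_neg hjine, if_pos rfl]
        omega
      · by_cases hB2 : a s q0 ≤ c i - 1
        · refine ⟨q0, ?_⟩
          rw [heval, hq0i, if_pos rfl, if_neg (Ne.symm hjine)]
          omega
        · push_neg at hB1 hB2
          have hciq : a s q0 = c i := by
            rw [hq0i] at hq0
            omega
          have haqj : 1 < a s qj := by omega
          have hqjq0 : qj < q0 := by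
            rw [Fin.lt_def]
            have h2 : (i : ℕ) = (q0 : ℕ) := by rw [← hq0i]; rfl
            have h1 : (j : ℕ) < (i : ℕ) := hji
            simpa [hqj] using by omega
          obtain ⟨s', hs'⟩ := hcond s qj q0 haqj hqjq0
          have hcs' : monF k c ∈ powIdeal k (t s') (ht s') (a s') := by
            rw [monF_mem_powIdeal_iff]
            exact ((hmemI c).mp hc.1) s'
          have hcmod := hs' hcs'
          rw [monF_mem_powIdeal_iff] at hcmod
          obtain ⟨q, hqm⟩ := hcmod
          have hqm' : a s q - (if q = qj then 1 else 0) + (if q = q0 then 1 else 0)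
              ≤ c (Fin.castLE (ht s) q) := hqm
          have hqjq0' : qj ≠ q0 := ne_of_lt hqjq0
          rcases eq_or_ne q q0 with rfl | hqq0
          · rw [if_neg (Ne.symm hqjq0'), if_pos rfl, hq0i] at hqm'
            omega
          · rcases eq_or_ne q qj with rfl | hqqj
            · rw [if_pos rfl, if_neg hqjq0', hqjc] at hqm'
              omega
            · rw [if_neg hqqj, if_neg hqq0] at hqm'
              have hcqi : Fin.castLE (ht s) q ≠ i :=
                fun h => hqq0 (hinj s _ _ (h.trans hq0i.symm))
              have := hA q hcqi
              omega
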